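/- Let $W = \sum_{i=1}^n X_i$ where $X_1,\dots,X_n$ are (not necessarily independent) Bernoulli random variables, and suppose $b^2 := \mathbb{E}[W^2] > 0$. For each pair $(j,k)$ with $\mathbb{P}(X_j = X_k = 1) > 0$, let $W^{(j,k)}$ be a random variable with the conditional distribution of $W$ given $X_j = X_k = 1$, and let $(J,K)$ be an independent random pair with $\mathbb{P}(J=j, K=k) = \mathbb{E}[X_j X_k]/b^2$. Then $W'' := W^{(J,K)}$ satisfies $\mathbb{E}[f(W'')] = \mathbb{E}[W^2 f(W)]/b^2$ for every bounded function $f$. -/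

import Mathlib

open Real MeasureTheory ProbabilityTheory

theorem double_size_bias_construction {Ω Ω' : Type*} [MeasurableSpace Ω]
    [MeasurableSpace Ω'] (P : Measure Ω) [IsProbabilityMeasure P]
    (Q : Measure Ω') [IsProbabilityMeasure Q]
    (n : ℕ) (X : Fin n → Ω → ℝ) (hXm : ∀ i, Measurable (X i))
    (hXval : ∀ i ω, X i ω = 0 ∨ X i ω = 1)
    (W : Ω → ℝ) (hW : W = fun ω => ∑ i, X i ω)
    (b2 : ℝ) (hb2 : b2 = ∫ ω, (W ω)^2 ∂P) (hb2pos : 0 < b2)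
    (Wjk : Fin n → Fin n → Ω' → ℝ) (hWjkm : ∀ j k, Measurable (Wjk j k))
    (hWjklaw : ∀ j k, 0 < P {ω | X j ω = 1 ∧ X k ω = 1} →
      Measure.map (Wjk j k) Q =
        Measure.map W (ProbabilityTheory.cond P {ω | X j ω = 1 ∧ X k ω = 1}))
    (JK : Ω' → Fin n × Fin n) (hJKm : Measurable JK)
    (hJKlaw : ∀ j k, Q {ω' | JK ω' = (j, k)} =
      ENNReal.ofReal ((∫ ω, X j ω * X k ω ∂P) / b2))
    (hindep : IndepFun JK (fun ω' (p : Fin n × Fin n) => Wjk p.1 p.2 ω') Q)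
    (f : ℝ → ℝ) (hfm : Measurable f) (hfb : ∃ C, ∀ x, |f x| ≤ C) :
    ∫ ω', f (Wjk (JK ω').1 (JK ω').2 ω') ∂Q =
      (∫ ω, (W ω)^2 * f (W ω) ∂P) / b2 := by
  obtain ⟨C, hC⟩ := hfb
  have hC0 : 0 ≤ C := le_trans (abs_nonneg _) (hC 0)
  have hWm : Measurable W := by
    rw [hW]; exact Finset.measurable_sum _ fun i _ => hXm i
  have hXb : ∀ i ω, |X i ω| ≤ 1 := by
    intro i ω; rcases hXval i ω with h | h <;> simp [h]
  -- the sets A j k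
  have hAm : ∀ j k : Fin n, MeasurableSet {ω | X j ω = 1 ∧ X k ω = 1} := by
    intro j k
    have : {ω | X j ω = 1 ∧ X k ω = 1} = X j ⁻¹' {1} ∩ X k ⁻¹' {1} := by
      ext ω; simp [Set.mem_setOf_eq]
    rw [this]
    exact (hXm j (measurableSet_singleton 1)).inter (hXm k (measurableSet_singleton 1))
  -- product of X's is the indicator
  have hind : ∀ (j k : Fin n) (g : Ω → ℝ) (ω : Ω),
      X j ω * X k ω * g ω = Set.indicator {ω | X j ω = 1 ∧ X k ω = 1} g ω := by
    intro j k g ω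
    rcases hXval j ω with h1 | h1 <;> rcases hXval k ω with h2 | h2 <;>
      simp [Set.indicator_apply, Set.mem_setOf_eq, h1, h2]
  have hXX : ∀ j k : Fin n, ∫ ω, X j ω * X k ω ∂P
      = (P {ω | X j ω = 1 ∧ X k ω = 1}).toReal := by
    intro j k
    have h1 : ∀ ω, X j ω * X k ω
        = Set.indicator {ω | X j ω = 1 ∧ X k ω = 1} (fun _ => (1:ℝ)) ω := by
      intro ω; simpa using hind j k (fun _ => 1) ω
    rw [integral_congr_ae (Filter.Eventually.of_forall h1),
      integral_indicator_const (1:ℝ) (hAm j k)]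
    simp [measureReal_def]
  -- integrability on P side
  have hPint : ∀ j k : Fin n, Integrable (fun ω => X j ω * X k ω * f (W ω)) P := by
    intro j k
    refine Integrable.mono' (integrable_const C)
      (((hXm j).mul (hXm k)).mul (hfm.comp hWm)).aestronglyMeasurable
      (Filter.Eventually.of_forall fun ω => ?_)
    have h1 := hXb j ω; have h2 := hXb k ω; have h3 := hC (W ω)
    calc |X j ω * X k ω * f (W ω)| = |X j ω| * |X k ω| * |f (W ω)| := by
          rw [abs_mul, abs_mul]
      _ ≤ 1 * 1 * C := by gcongr <;> positivity
      _ = C := by ring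
  -- integral of XjXk * f(W) over a null A is 0, etc.
  -- key per-pair computation
  have key : ∀ j k : Fin n,
      ∫ ω', (if JK ω' = (j, k) then (1:ℝ) else 0) * f (Wjk j k ω') ∂Q
        = (∫ ω, X j ω * X k ω * f (W ω) ∂P) / b2 := by
    intro j k
    have hg : Measurable (fun q : Fin n × Fin n => if q = (j, k) then (1:ℝ) else 0) :=
      measurable_of_countable _
    have hh : Measurable (fun φ : Fin n × Fin n → ℝ => f (φ (j, k))) :=
      hfm.comp (measurable_pi_apply _)
    have hI : IndepFun (fun ω' => if JK ω' = (j, k) then (1:ℝ) else 0)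
        (fun ω' => f (Wjk j k ω')) Q := by
      have := hindep.comp hg hh
      simpa [Function.comp_def] using this
    have hmul := IndepFun.integral_fun_mul_eq_mul_integral hI (hg.comp hJKm).aestronglyMeasurable
      (hfm.comp (hWjkm j k)).aestronglyMeasurable
    rw [hmul]
    -- first factor
    have hset : MeasurableSet {ω' | JK ω' = (j, k)} := by
      have : {ω' | JK ω' = (j, k)} = JK ⁻¹' {(j, k)} := by ext ω'; simp
      rw [this]; exact hJKm (measurableSet_singleton _)
    have hfac1 : ∫ ω', (if JK ω' = (j, k) then (1:ℝ) else 0) ∂Q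
        = (Q {ω' | JK ω' = (j, k)}).toReal := by
      have h1 : ∀ ω', (if JK ω' = (j, k) then (1:ℝ) else 0)
          = Set.indicator {ω' | JK ω' = (j, k)} (fun _ => (1:ℝ)) ω' := by
        intro ω'; simp [Set.indicator_apply, Set.mem_setOf_eq]
      rw [integral_congr_ae (Filter.Eventually.of_forall h1),
        integral_indicator_const (1:ℝ) hset]
      simp [measureReal_def]
    have hXXnn : 0 ≤ ∫ ω, X j ω * X k ω ∂P := by
      rw [hXX j k]; exact ENNReal.toReal_nonneg
    have hQval : (Q {ω' | JK ω' = (j, k)}).toReal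
        = (P {ω | X j ω = 1 ∧ X k ω = 1}).toReal / b2 := by
      rw [hJKlaw j k, ENNReal.toReal_ofReal (div_nonneg hXXnn hb2pos.le), hXX j k]
    rw [hfac1, hQval]
    by_cases hPA : P {ω | X j ω = 1 ∧ X k ω = 1} = 0
    · have hz : ∫ ω, X j ω * X k ω * f (W ω) ∂P = 0 := by
        rw [integral_congr_ae (Filter.Eventually.of_forall (hind j k fun ω => f (W ω))),
          integral_indicator (hAm j k), Measure.restrict_eq_zero.mpr hPA,
          integral_zero_measure]
      rw [hz, hPA]
      simp
    · have hpos : 0 < P {ω | X j ω = 1 ∧ X k ω = 1} := pos_iff_ne_zero.mpr hPA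
      have hPAne : (P {ω | X j ω = 1 ∧ X k ω = 1}).toReal ≠ 0 :=
        ENNReal.toReal_ne_zero.mpr ⟨hPA, measure_ne_top _ _⟩
      have hfac2 : ∫ ω', f (Wjk j k ω') ∂Q
          = (P {ω | X j ω = 1 ∧ X k ω = 1}).toReal⁻¹
            * ∫ ω, X j ω * X k ω * f (W ω) ∂P := by
        rw [← integral_map (hWjkm j k).aemeasurable hfm.aestronglyMeasurable,
          hWjklaw j k hpos,
          integral_map hWm.aemeasurable hfm.aestronglyMeasurable,
          ProbabilityTheory.cond, integral_smul_measure, ENNReal.toReal_inv,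
          smul_eq_mul,
          integral_congr_ae (Filter.Eventually.of_forall (hind j k fun ω => f (W ω))),
          integral_indicator (hAm j k)]
      rw [hfac2]
      field_simp
  -- expand the main integral as a sum over pairs
  have expand : ∀ ω', f (Wjk (JK ω').1 (JK ω').2 ω')
      = ∑ p : Fin n × Fin n, (if JK ω' = p then (1:ℝ) else 0) * f (Wjk p.1 p.2 ω') := by
    intro ω'
    rw [Finset.sum_eq_single (JK ω')]
    · simp
    · intro p _ hp
      simp [Ne.symm hp]
    · intro h; exact absurd (Finset.mem_univ _) h
  have hQint : ∀ p : Fin n × Fin n,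
      Integrable (fun ω' => (if JK ω' = p then (1:ℝ) else 0) * f (Wjk p.1 p.2 ω')) Q := by
    intro p
    have hg : Measurable (fun q : Fin n × Fin n => if q = p then (1:ℝ) else 0) :=
      measurable_of_countable _
    refine Integrable.mono' (integrable_const C)
      (((hg.comp hJKm)).mul (hfm.comp (hWjkm p.1 p.2))).aestronglyMeasurable
      (Filter.Eventually.of_forall fun ω' => ?_)
    by_cases h : JK ω' = p <;> simp [h, hC _, hC0]
  calc ∫ ω', f (Wjk (JK ω').1 (JK ω').2 ω') ∂Q
      = ∫ ω', ∑ p : Fin n × Fin n,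
          (if JK ω' = p then (1:ℝ) else 0) * f (Wjk p.1 p.2 ω') ∂Q :=
        integral_congr_ae (Filter.Eventually.of_forall expand)
    _ = ∑ p : Fin n × Fin n, ∫ ω',
          (if JK ω' = p then (1:ℝ) else 0) * f (Wjk p.1 p.2 ω') ∂Q :=
        integral_finset_sum _ fun p _ => hQint p
    _ = ∑ p : Fin n × Fin n, (∫ ω, X p.1 ω * X p.2 ω * f (W ω) ∂P) / b2 := by
        refine Finset.sum_congr rfl fun p _ => ?_
        have := key p.1 p.2
        simpa using this
    _ = (∑ p : Fin n × Fin n, ∫ ω, X p.1 ω * X p.2 ω * f (W ω) ∂P) / b2 := by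
        rw [Finset.sum_div]
    _ = (∫ ω, ∑ p : Fin n × Fin n, X p.1 ω * X p.2 ω * f (W ω) ∂P) / b2 := by
        rw [integral_finset_sum _ fun p _ => hPint p.1 p.2]
    _ = (∫ ω, (W ω)^2 * f (W ω) ∂P) / b2 := by
        congr 1
        refine integral_congr_ae (Filter.Eventually.of_forall fun ω => ?_)
        show ∑ p : Fin n × Fin n, X p.1 ω * X p.2 ω * f (W ω) = (W ω)^2 * f (W ω)
        rw [← Finset.sum_mul]
        congr 1
        rw [Fintype.sum_prod_type]
        simp only [hW]
        rw [sq, Fintype.sum_mul_sum]
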